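/- Under the nonlinear fixed-point iteration setup, for all integers n ≥ 0 and i ≥ 1, the iteration errors satisfy ‖ε_{n+i} − F̃ⁱ ε_n‖ ≤ C_i ‖ε_n‖², where C_i = a·L^{i−1}·(1 − Lⁱ)/(1 − L). -/

import Mathlib

/-- Under the nonlinear fixed-point iteration setup, for all `n ≥ 0` and
`i ≥ 1`, the errors `ε_m = x_m − s` satisfy `‖ε_{n+i} − F̃ⁱ ε_n‖ ≤ C_i ‖ε_n‖²`, where
`C_i = a·L^{i−1}·(1 − Lⁱ)/(1 − L)`. -/
theorem rre_error_expansion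
    (N : ℕ) (hN : 1 ≤ N) (s : EuclideanSpace ℂ (Fin N)) (δ : ℝ) (hδ : 0 < δ)
    (L a : ℝ) (hL0 : 0 < L) (hL1 : L < 1) (ha : 0 < a)
    (f : EuclideanSpace ℂ (Fin N) → EuclideanSpace ℂ (Fin N)) (hfs : f s = s)
    (hLip : ∀ x y : EuclideanSpace ℂ (Fin N),
      ‖x - s‖ ≤ δ → ‖y - s‖ ≤ δ → ‖f x - f y‖ ≤ L * ‖x - y‖)
    (F : EuclideanSpace ℂ (Fin N) →L[ℂ] EuclideanSpace ℂ (Fin N)) (hF : ‖F‖ ≤ L)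
    (hTay : ∀ x : EuclideanSpace ℂ (Fin N),
      ‖x - s‖ ≤ δ → ‖f x - s - F (x - s)‖ ≤ a * ‖x - s‖ ^ 2)
    (x : ℕ → EuclideanSpace ℂ (Fin N)) (hx0 : ‖x 0 - s‖ ≤ δ)
    (hxit : ∀ m, x (m + 1) = f (x m)) :
    ∀ n i : ℕ, 1 ≤ i →
      ‖(x (n + i) - s) - (F ^ i) (x n - s)‖ ≤
        a * L ^ (i - 1) * (1 - L ^ i) / (1 - L) * ‖x n - s‖ ^ 2 := by
  have hsδ : ‖s - s‖ ≤ δ := by simp [le_of_lt hδ]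
  have hdec : ∀ m, ‖x m - s‖ ≤ δ → ‖x (m + 1) - s‖ ≤ L * ‖x m - s‖ := by
    intro m hm
    rw [hxit]
    have := hLip (x m) s hm hsδ
    rwa [hfs] at this
  have hball : ∀ m, ‖x m - s‖ ≤ δ := by
    intro m
    induction m with
    | zero => exact hx0
    | succ k ih =>
      calc ‖x (k + 1) - s‖ ≤ L * ‖x k - s‖ := hdec k ih
        _ ≤ 1 * δ := by
          apply mul_le_mul (le_of_lt hL1) ih (norm_nonneg _) zero_le_one
        _ = δ := one_mul δ
  have hpow : ∀ n i : ℕ, ‖x (n + i) - s‖ ≤ L ^ i * ‖x n - s‖ := by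
    intro n i
    induction i with
    | zero => simp
    | succ k ih =>
      calc ‖x (n + k + 1) - s‖ ≤ L * ‖x (n + k) - s‖ := hdec _ (hball _)
        _ ≤ L * (L ^ k * ‖x n - s‖) := by
            exact mul_le_mul_of_nonneg_left ih (le_of_lt hL0)
        _ = L ^ (k + 1) * ‖x n - s‖ := by ring
  have hstep : ∀ m, ‖x (m + 1) - s - F (x m - s)‖ ≤ a * ‖x m - s‖ ^ 2 := by
    intro m
    rw [hxit]
    exact hTay (x m) (hball m)
  intro n i hi
  induction i, hi using Nat.le_induction with
  | base =>
    have hL : (1:ℝ) - L ≠ 0 := by linarith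
    have heq : a * L ^ (1 - 1) * (1 - L ^ 1) / (1 - L) = a := by
      rw [pow_one]; field_simp; simp
    rw [heq, pow_one]
    exact hstep n
  | succ k hk ih =>
    have key : x (n + (k + 1)) - s - (F ^ (k + 1)) (x n - s)
        = (x (n + k + 1) - s - F (x (n + k) - s))
          + F (x (n + k) - s - (F ^ k) (x n - s)) := by
      rw [pow_succ']
      simp only [ContinuousLinearMap.mul_apply, map_sub]
      abel_nf
    rw [key]
    have h1 := hstep (n + k)
    have h2 : ‖F (x (n + k) - s - (F ^ k) (x n - s))‖
        ≤ L * (a * L ^ (k - 1) * (1 - L ^ k) / (1 - L) * ‖x n - s‖ ^ 2) := by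
      calc ‖F (x (n + k) - s - (F ^ k) (x n - s))‖
          ≤ ‖F‖ * ‖x (n + k) - s - (F ^ k) (x n - s)‖ := F.le_opNorm _
        _ ≤ L * (a * L ^ (k - 1) * (1 - L ^ k) / (1 - L) * ‖x n - s‖ ^ 2) := by
            apply mul_le_mul hF ih (norm_nonneg _) (le_of_lt hL0)
    have h3 : a * ‖x (n + k) - s‖ ^ 2 ≤ a * (L ^ k * ‖x n - s‖) ^ 2 := by
      apply mul_le_mul_of_nonneg_left _ (le_of_lt ha)
      exact pow_le_pow_left₀ (norm_nonneg _) (hpow n k) 2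
    have h4 := norm_add_le (x (n + k + 1) - s - F (x (n + k) - s))
      (F (x (n + k) - s - (F ^ k) (x n - s)))
    have harith : a * (L ^ k * ‖x n - s‖) ^ 2
        + L * (a * L ^ (k - 1) * (1 - L ^ k) / (1 - L) * ‖x n - s‖ ^ 2)
        = a * L ^ (k + 1 - 1) * (1 - L ^ (k + 1)) / (1 - L) * ‖x n - s‖ ^ 2 := by
      obtain ⟨j, rfl⟩ := Nat.exists_eq_add_of_le hk
      have hL : (1 : ℝ) - L ≠ 0 := by linarith
      simp only [Nat.add_sub_cancel_left, Nat.add_sub_cancel]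
      field_simp
      ring
    calc _ ≤ ‖x (n + k + 1) - s - F (x (n + k) - s)‖
            + ‖F (x (n + k) - s - (F ^ k) (x n - s))‖ := h4
      _ ≤ a * (L ^ k * ‖x n - s‖) ^ 2
            + L * (a * L ^ (k - 1) * (1 - L ^ k) / (1 - L) * ‖x n - s‖ ^ 2) := by
          have := le_trans h1 h3
          linarith
      _ = _ := harith
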